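/- Theorem (100% admissibility of MSL(ℓ)): Let N ≥ 1, ℓ ∈ ℕ, and let λ be an admissible i.i.d. load vector. Then for the deviation process (d^t) generated from d⁰ = 0 by any measurable MSL(ℓ) policy, liminf_{t→∞} E[d_q^t] > −∞ for every VOQ q ∈ Fin N × Fin N. -/

import Mathlib

open Finset MeasureTheory ProbabilityTheory

/-- The virtual output queues (VOQs) of an `N×N` input-queued switch, indexed by
input–output port pairs. -/
abbrev VOQ (N : ℕ) := Fin N × Fin N

/-- The complete configuration vector associated with a permutation `π` of the ports:
`v_π(i,j) = 1` if `j = π(i)` and `0` otherwise. -/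
def confVec (N : ℕ) (π : Equiv.Perm (Fin N)) : VOQ N → ℤ :=
  fun q => if q.2 = π q.1 then 1 else 0

/-- The standard (integer) inner product on `ℤ^{VOQ N}`. -/
def ipZ (N : ℕ) (a b : VOQ N → ℤ) : ℤ := ∑ q, a q * b q

namespace MSL

variable {N : ℕ}

lemma confVec_cases (π : Equiv.Perm (Fin N)) (q : VOQ N) :
    confVec N π q = 0 ∨ confVec N π q = 1 := by
  unfold confVec; split <;> simp

lemma confVec_nonneg (π : Equiv.Perm (Fin N)) (q : VOQ N) : (0:ℤ) ≤ confVec N π q := by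
  rcases confVec_cases π q with h | h <;> simp [h]

lemma confVec_le_one (π : Equiv.Perm (Fin N)) (q : VOQ N) : confVec N π q ≤ 1 := by
  rcases confVec_cases π q with h | h <;> simp [h]

lemma sum_confVec (π : Equiv.Perm (Fin N)) : ∑ q, confVec N π q = (N:ℤ) := by
  unfold confVec
  rw [Fintype.sum_prod_type]
  simp [Finset.sum_ite_eq']

lemma sum_confVec_real (π : Equiv.Perm (Fin N)) :
    ∑ q, ((confVec N π q : ℤ) : ℝ) = (N:ℝ) := by
  exact_mod_cast congrArg (fun z : ℤ => (z : ℝ)) (sum_confVec π)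

/-- The inner product of `d` with `confVec π` written as a sum over inputs. -/
lemma ip_confVec (π : Equiv.Perm (Fin N)) (f : VOQ N → ℝ) :
    ∑ q, f q * ((confVec N π q : ℤ) : ℝ) = ∑ i, f (i, π i) := by
  unfold confVec
  rw [Fintype.sum_prod_type]
  congr 1; funext i
  simp [mul_ite, Finset.sum_ite_eq']

end MSL

namespace MSL

variable {N : ℕ} {ℓ : ℕ} {u : (VOQ N → ℤ) → (VOQ N → ℤ) → (VOQ N → ℤ)}

section Policy

variable (hMSL : ∀ dv xv : VOQ N → ℤ, ∃ π : Equiv.Perm (Fin N),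
      (∀ π' : Equiv.Perm (Fin N),
        ipZ N (dv - xv) (confVec N π) ≤ ipZ N (dv - xv) (confVec N π')) ∧
      u dv xv = fun q => if (ℓ : ℤ) ≤ dv q - xv q then 0 else confVec N π q)

include hMSL

lemma u_cases (dv xv : VOQ N → ℤ) (q : VOQ N) :
    u dv xv q = 0 ∨ u dv xv q = 1 := by
  obtain ⟨π, -, hform⟩ := hMSL dv xv
  rw [hform]
  dsimp only
  split
  · exact Or.inl rfl
  · exact confVec_cases π q

lemma policy_ip_bound (dv xv : VOQ N → ℤ) (hx : ∀ q, xv q = 0 ∨ xv q = 1)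
    (π' : Equiv.Perm (Fin N)) :
    ipZ N dv (u dv xv) ≤ ipZ N dv (confVec N π') + N := by
  obtain ⟨π, hmin, hform⟩ := hMSL dv xv
  have hsplit : ipZ N dv (u dv xv)
      = ipZ N (dv - xv) (u dv xv) + ∑ q, xv q * u dv xv q := by
    unfold ipZ
    rw [← Finset.sum_add_distrib]
    refine Finset.sum_congr rfl fun q _ => ?_
    simp [Pi.sub_apply]; ring
  have h2 : ∑ q, xv q * u dv xv q ≤ (N:ℤ) := by
    calc ∑ q, xv q * u dv xv q ≤ ∑ q, confVec N π q := by
          refine Finset.sum_le_sum fun q _ => ?_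
          rw [hform]; dsimp only
          split
          · simpa using confVec_nonneg π q
          · rcases hx q with h | h <;> simp [h, confVec_nonneg π q]
      _ = (N:ℤ) := sum_confVec π
  have h3 : ipZ N (dv - xv) (u dv xv) ≤ ipZ N (dv - xv) (confVec N π) := by
    refine Finset.sum_le_sum fun q _ => ?_
    rw [hform]; dsimp only
    split
    · rename_i hc
      have h0 : (0:ℤ) ≤ (dv - xv) q := by
        simp only [Pi.sub_apply]; omega
      simpa using mul_nonneg h0 (confVec_nonneg π q)
    · exact le_refl _
  have h4 := hmin π'
  have h5 : ipZ N (dv - xv) (confVec N π') ≤ ipZ N dv (confVec N π') := by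
    refine Finset.sum_le_sum fun q _ => ?_
    have hxq : (0:ℤ) ≤ xv q := by rcases hx q with h | h <;> simp [h]
    have := mul_nonneg hxq (confVec_nonneg π' q)
    simp only [Pi.sub_apply]
    nlinarith [confVec_nonneg π' q]
  linarith

lemma d_invariant (dv xv : VOQ N → ℤ) (hx : ∀ q, xv q = 0 ∨ xv q = 1)
    (hd : ∀ q, dv q ≤ (ℓ:ℤ) + 1) (q : VOQ N) :
    (dv + u dv xv - xv) q ≤ (ℓ:ℤ) + 1 := by
  obtain ⟨π, -, hform⟩ := hMSL dv xv
  simp only [Pi.add_apply, Pi.sub_apply]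
  rw [hform]; dsimp only
  have hdq := hd q
  rcases hx q with h | h <;> rcases confVec_cases π q with c | c <;>
    split <;> rename_i hc <;> simp [h, c] at hc ⊢ <;> omega

end Policy

end MSL

namespace MSL

variable {N : ℕ}

/-- Squared Euclidean norm of an integer vector, as a real number. -/
def rV (dv : VOQ N → ℤ) : ℝ := ∑ q, (dv q : ℝ)^2

/-- Euclidean norm. -/
noncomputable def rY (dv : VOQ N → ℤ) : ℝ := Real.sqrt (rV dv)

lemma rV_nonneg (dv : VOQ N → ℤ) : 0 ≤ rV dv :=
  Finset.sum_nonneg fun q _ => sq_nonneg _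

lemma rY_nonneg (dv : VOQ N → ℤ) : 0 ≤ rY dv := Real.sqrt_nonneg _

lemma rY_sq (dv : VOQ N → ℤ) : (rY dv)^2 = rV dv := Real.sq_sqrt (rV_nonneg dv)

lemma abs_le_rY (dv : VOQ N → ℤ) (q : VOQ N) : |(dv q : ℝ)| ≤ rY dv := by
  rw [rY, ← Real.sqrt_sq_eq_abs]
  exact Real.sqrt_le_sqrt (Finset.single_le_sum (f := fun q => (dv q : ℝ)^2)
    (fun q _ => sq_nonneg _) (Finset.mem_univ q))

lemma card_VOQ : (Fintype.card (VOQ N) : ℝ) = (N:ℝ)^2 := by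
  simp [Fintype.card_prod]; ring

lemma rY_add_le (dv wv : VOQ N → ℤ) (hw : ∀ q, |wv q| ≤ 1) :
    rY (dv + wv) ≤ rY dv + N := by
  have hw2 : ∑ q, ((wv q : ℝ))^2 ≤ (N:ℝ)^2 := by
    calc ∑ q, ((wv q : ℝ))^2 ≤ ∑ _q : VOQ N, (1:ℝ) := by
          refine Finset.sum_le_sum fun q _ => ?_
          have : |(wv q : ℝ)| ≤ 1 := by exact_mod_cast hw q
          nlinarith [this, abs_nonneg (wv q : ℝ), sq_abs (wv q : ℝ)]
      _ = (Fintype.card (VOQ N) : ℝ) := by simp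
      _ = (N:ℝ)^2 := card_VOQ
  have hCS : ∑ q, (dv q : ℝ) * (wv q : ℝ) ≤ rY dv * N := by
    calc ∑ q, (dv q : ℝ) * (wv q : ℝ)
        ≤ Real.sqrt (∑ q, (dv q:ℝ)^2) * Real.sqrt (∑ q, (wv q:ℝ)^2) :=
          Real.sum_mul_le_sqrt_mul_sqrt _ _ _
      _ ≤ rY dv * N := by
          rw [rY, rV]
          refine mul_le_mul_of_nonneg_left ?_ (Real.sqrt_nonneg _)
          calc Real.sqrt (∑ q, (wv q:ℝ)^2) ≤ Real.sqrt ((N:ℝ)^2) :=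
                Real.sqrt_le_sqrt hw2
            _ = N := by rw [Real.sqrt_sq (by positivity)]
  have hVexp : rV (dv + wv) = rV dv + 2 * ∑ q, (dv q:ℝ)*(wv q:ℝ) + ∑ q, (wv q:ℝ)^2 := by
    unfold rV
    have hterm : ∀ q : VOQ N, (((dv + wv) q : ℤ) : ℝ)^2
        = (dv q:ℝ)^2 + 2*((dv q:ℝ)*(wv q:ℝ)) + (wv q:ℝ)^2 := by
      intro q; push_cast [Pi.add_apply]; ring
    rw [Finset.sum_congr rfl (fun q _ => hterm q), Finset.sum_add_distrib,
      Finset.sum_add_distrib, ← Finset.mul_sum]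
  have hle : rV (dv + wv) ≤ (rY dv + N)^2 := by
    rw [hVexp]
    nlinarith [rY_sq dv, hCS, hw2, rY_nonneg dv]
  calc rY (dv + wv) = Real.sqrt (rV (dv + wv)) := rfl
    _ ≤ Real.sqrt ((rY dv + N)^2) := Real.sqrt_le_sqrt hle
    _ = rY dv + N := Real.sqrt_sq (add_nonneg (rY_nonneg dv) (Nat.cast_nonneg N))

end MSL

namespace MSL

variable {N : ℕ}

lemma rY_diff_abs (dv dv' : VOQ N → ℤ) (h : ∀ q, |dv' q - dv q| ≤ 1) :
    |rY dv' - rY dv| ≤ N := by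
  have e1 : dv + (dv' - dv) = dv' := by abel
  have e2 : dv' + (dv - dv') = dv := by abel
  have h1 : rY dv' ≤ rY dv + N := by
    have := rY_add_le dv (dv' - dv) (fun q => by simpa using h q)
    rwa [e1] at this
  have h2 : rY dv ≤ rY dv' + N := by
    have := rY_add_le dv' (dv - dv') (fun q => by
      have := h q; simp only [Pi.sub_apply] at *; rw [abs_sub_comm]; exact this)
    rwa [e2] at this
  rw [abs_le]; constructor <;> linarith

lemma exp_quad {z : ℝ} (h : |z| ≤ 1) : Real.exp z ≤ 1 + z + z^2 := by
  have hb := Real.exp_bound h (n := 2) (by norm_num)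
  have h2 : |Real.exp z - (1 + z)| ≤ z ^ 2 * (3 / (2 * 2)) := by
    simpa [Finset.sum_range_succ] using hb
  have h3 := (abs_le.mp h2).2
  nlinarith [sq_nonneg z]

end MSL

namespace MSL

/-- Additive constant in the drift bound. -/
def CCf (N ℓ : ℕ) : ℝ := 4*N*((ℓ:ℝ)+1) + 2*N + (N:ℝ)^2 + 4*((ℓ:ℝ)+1)

/-- The `x`-independent part of the quadratic drift bound; a function of the state only. -/
noncomputable def Gf (N ℓ : ℕ) (ε : ℝ) (w : Equiv.Perm (Fin N) → ℝ) (dv : VOQ N → ℤ) : ℝ :=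
  2*ε*(⨅ q : VOQ N, (dv q : ℝ))
    + 2*(1-ε) * (∑ q, (dv q:ℝ) * ∑ σ, w σ * ((confVec N σ q : ℤ):ℝ))
    + (2*N*((ℓ:ℝ)+1) + 2*N + (N:ℝ)^2)

lemma CCf_pos (N ℓ : ℕ) (hN : 1 ≤ N) : 0 < CCf N ℓ := by
  have h1 : (1:ℝ) ≤ N := by exact_mod_cast hN
  unfold CCf; nlinarith


lemma min_bound {N : ℕ} (hN : 1 ≤ N) (dv : VOQ N → ℤ) (m L : ℝ)
    (hm_le : ∀ q, m ≤ (dv q:ℝ)) (hmL : m ≤ L) (hL0 : 0 < L)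
    (hdR : ∀ q, (dv q:ℝ) ≤ L) :
    (N:ℝ)*m ≤ -(rY dv) + 2*(N:ℝ)*L := by
  have hNR : (0:ℝ) < N := by exact_mod_cast lt_of_lt_of_le zero_lt_one hN
  have hR0 : 0 ≤ max (-m) L := le_trans (le_of_lt hL0) (le_max_right _ _)
  have hVle : rV dv ≤ ((N:ℝ) * max (-m) L)^2 := by
    calc rV dv ≤ ∑ _q : VOQ N, (max (-m) L)^2 := by
          refine Finset.sum_le_sum fun q _ => ?_
          refine sq_le_sq' ?_ ?_
          · have h1 : -(max (-m) L) ≤ m := by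
              have := le_max_left (-m) L; linarith
            linarith [hm_le q]
          · exact le_trans (hdR q) (le_max_right _ _)
      _ = (Fintype.card (VOQ N) : ℝ) * (max (-m) L)^2 := by
          rw [Finset.sum_const, nsmul_eq_mul, Finset.card_univ]
      _ = ((N:ℝ) * max (-m) L)^2 := by rw [card_VOQ]; ring
  have hYR : rY dv ≤ (N:ℝ) * max (-m) L := by
    calc rY dv = Real.sqrt (rV dv) := rfl
      _ ≤ Real.sqrt (((N:ℝ) * max (-m) L)^2) := Real.sqrt_le_sqrt hVle
      _ = (N:ℝ) * max (-m) L := Real.sqrt_sq (mul_nonneg (le_of_lt hNR) hR0)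
  have hNL0 : 0 ≤ (N:ℝ)*L := by positivity
  rcases le_total L (-m) with hcase | hcase
  · rw [max_eq_left hcase] at hYR
    nlinarith
  · rw [max_eq_right hcase] at hYR
    nlinarith [mul_le_mul_of_nonneg_left hmL (le_of_lt hNR)]

set_option maxHeartbeats 1000000 in
lemma drift_key {N : ℕ} (ℓ : ℕ) (hN : 1 ≤ N)
    (ε : ℝ) (hε0 : 0 < ε) (hε1 : ε ≤ 1)
    (lam : VOQ N → ℝ) (hlam0 : ∀ q, 0 ≤ lam q)
    (w : Equiv.Perm (Fin N) → ℝ) (hw0 : ∀ σ, 0 ≤ w σ) (hw1 : ∑ σ, w σ = 1)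
    (hdom : ∀ q, lam q ≤ (1 - ε) * ∑ σ, w σ * ((confVec N σ q : ℤ):ℝ))
    (dv xv uv : VOQ N → ℤ)
    (hd : ∀ q, dv q ≤ (ℓ:ℤ) + 1)
    (hx : ∀ q, xv q = 0 ∨ xv q = 1)
    (hu01 : ∀ q, uv q = 0 ∨ uv q = 1)
    (hu : ∀ π : Equiv.Perm (Fin N), ipZ N dv uv ≤ ipZ N dv (confVec N π) + N) :
    rV (dv + uv - xv) ≤ rV dv + Gf N ℓ ε w dv - 2 * ∑ q, (dv q:ℝ) * (xv q:ℝ)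
    ∧ Gf N ℓ ε w dv - 2 * ∑ q, (dv q:ℝ) * lam q ≤ -(2*ε/N) * rY dv + CCf N ℓ := by
  haveI : Nonempty (Fin N) := ⟨⟨0, hN⟩⟩
  have hNR : (0:ℝ) < N := by exact_mod_cast lt_of_lt_of_le zero_lt_one hN
  set L : ℝ := (ℓ:ℝ)+1 with hLdef
  have hL0 : 0 < L := by positivity
  set m : ℝ := ⨅ q : VOQ N, (dv q : ℝ) with hmdef
  set D : VOQ N → ℝ := fun q => ∑ σ, w σ * ((confVec N σ q : ℤ):ℝ) with hDdef
  have hGf : Gf N ℓ ε w dv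
      = 2*ε*m + 2*(1-ε)*(∑ q, (dv q:ℝ) * D q) + (2*(N:ℝ)*L + 2*(N:ℝ) + (N:ℝ)^2) := rfl
  have hCC : CCf N ℓ = 4*(N:ℝ)*L + 2*(N:ℝ) + (N:ℝ)^2 + 4*L := rfl
  clear_value L m D
  have hY0 : 0 ≤ rY dv := rY_nonneg dv
  set Yv : ℝ := rY dv with hYdef
  clear_value Yv
  have hdR : ∀ q, (dv q:ℝ) ≤ L := fun q => by
    rw [hLdef]; exact_mod_cast hd q
  have hm_le : ∀ q, m ≤ (dv q:ℝ) := by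
    intro q; rw [hmdef]
    exact ciInf_le (Set.Finite.bddBelow (Set.finite_range _)) q
  obtain ⟨q0, -, hq0min⟩ := Finset.exists_min_image Finset.univ (fun q : VOQ N => (dv q:ℝ))
    ⟨Classical.arbitrary _, Finset.mem_univ _⟩
  have hq0 : (dv q0 : ℝ) = m := by
    rw [hmdef]
    exact le_antisymm (le_ciInf fun q => hq0min q (Finset.mem_univ q))
      (ciInf_le (Set.Finite.bddBelow (Set.finite_range _)) q0)
  have hsumD : ∑ q, D q = N := by
    rw [hDdef]
    calc ∑ q : VOQ N, ∑ σ, w σ * ((confVec N σ q : ℤ):ℝ)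
        = ∑ σ, ∑ q : VOQ N, w σ * ((confVec N σ q : ℤ):ℝ) := Finset.sum_comm
      _ = ∑ σ, w σ * (N:ℝ) := by
          refine Finset.sum_congr rfl fun σ _ => ?_
          rw [← Finset.mul_sum, sum_confVec_real]
      _ = (N:ℝ) := by rw [← Finset.sum_mul, hw1, one_mul]
  have hdu_pi : ∀ π : Equiv.Perm (Fin N),
      ∑ q, (dv q:ℝ)*(uv q:ℝ) ≤ (∑ q, (dv q:ℝ)*((confVec N π q:ℤ):ℝ)) + N := by
    intro π
    have := hu π
    unfold ipZ at this
    exact_mod_cast this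
  have hdu_D : ∑ q, (dv q:ℝ)*(uv q:ℝ) ≤ (∑ q, (dv q:ℝ) * D q) + N := by
    have key : ∑ σ, w σ * ((∑ q, (dv q:ℝ)*((confVec N σ q:ℤ):ℝ)) + N)
        = (∑ q, (dv q:ℝ) * D q) + N := by
      simp_rw [mul_add, Finset.sum_add_distrib, ← Finset.sum_mul, hw1, one_mul,
        Finset.mul_sum]
      congr 1
      rw [Finset.sum_comm]
      refine Finset.sum_congr rfl fun q _ => ?_
      rw [hDdef, Finset.mul_sum]
      exact Finset.sum_congr rfl fun σ _ => by ring
    calc ∑ q, (dv q:ℝ)*(uv q:ℝ) = (∑ σ, w σ) * ∑ q, (dv q:ℝ)*(uv q:ℝ) := by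
          rw [hw1, one_mul]
      _ = ∑ σ, w σ * ∑ q, (dv q:ℝ)*(uv q:ℝ) := Finset.sum_mul _ _ _
      _ ≤ ∑ σ, w σ * ((∑ q, (dv q:ℝ)*((confVec N σ q:ℤ):ℝ)) + N) :=
          Finset.sum_le_sum fun σ _ => mul_le_mul_of_nonneg_left (hdu_pi σ) (hw0 σ)
      _ = (∑ q, (dv q:ℝ) * D q) + N := key
  have hdu_min : ∑ q, (dv q:ℝ)*(uv q:ℝ) ≤ m + (N:ℝ)*L + N := by
    refine le_trans (hdu_pi (Equiv.swap q0.1 q0.2)) ?_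
    have e := ip_confVec (Equiv.swap q0.1 q0.2) (fun p : VOQ N => (dv p:ℝ))
    rw [e]
    have hbound : ∑ i, ((dv (i, Equiv.swap q0.1 q0.2 i) : ℤ):ℝ) ≤ m + (N:ℝ)*L := by
      rw [← Finset.add_sum_erase _ _ (Finset.mem_univ q0.1)]
      have h1 : ((dv (q0.1, Equiv.swap q0.1 q0.2 q0.1) : ℤ):ℝ) = m := by
        rw [Equiv.swap_apply_left]
        simpa using hq0
      rw [h1]
      have h2 : ∑ i ∈ Finset.univ.erase q0.1, ((dv (i, Equiv.swap q0.1 q0.2 i) : ℤ):ℝ)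
          ≤ (N:ℝ) * L := by
        calc ∑ i ∈ Finset.univ.erase q0.1, ((dv (i, Equiv.swap q0.1 q0.2 i) : ℤ):ℝ)
            ≤ ∑ _i ∈ Finset.univ.erase q0.1, L :=
              Finset.sum_le_sum fun i _ => hdR _
          _ = ((Finset.univ.erase q0.1).card : ℝ) * L := by
              rw [Finset.sum_const, nsmul_eq_mul]
          _ ≤ (N:ℝ) * L := by
              refine mul_le_mul_of_nonneg_right ?_ (le_of_lt hL0)
              have hc := Finset.card_erase_le (s := (Finset.univ : Finset (Fin N))) (a := q0.1)
              have : (Finset.univ : Finset (Fin N)).card = N := by simp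
              exact_mod_cast le_trans hc (le_of_eq this)
      linarith
    linarith
  -- expansion of the square
  have hterm : ∀ q : VOQ N, (((dv + uv - xv) q : ℤ) : ℝ)^2
      = (dv q:ℝ)^2 + 2*((dv q:ℝ)*((uv q:ℝ) - (xv q:ℝ))) + ((uv q:ℝ) - (xv q:ℝ))^2 := by
    intro q
    push_cast [Pi.add_apply, Pi.sub_apply]
    ring
  have hexp : rV (dv + uv - xv)
      = rV dv + 2*(∑ q, (dv q:ℝ)*((uv q:ℝ) - (xv q:ℝ))) + ∑ q, ((uv q:ℝ) - (xv q:ℝ))^2 := by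
    unfold rV
    rw [Finset.sum_congr rfl (fun q _ => hterm q), Finset.sum_add_distrib,
      Finset.sum_add_distrib, ← Finset.mul_sum]
  have hsq : ∑ q, ((uv q:ℝ) - (xv q:ℝ))^2 ≤ (N:ℝ)^2 := by
    calc ∑ q, ((uv q:ℝ) - (xv q:ℝ))^2 ≤ ∑ _q : VOQ N, (1:ℝ) := by
          refine Finset.sum_le_sum fun q _ => ?_
          rcases hu01 q with h | h <;> rcases hx q with h' | h' <;>
            simp [h, h'] <;> norm_num
      _ = (Fintype.card (VOQ N) : ℝ) := by simp
      _ = (N:ℝ)^2 := card_VOQ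
  have hsplit : ∑ q, (dv q:ℝ)*((uv q:ℝ) - (xv q:ℝ))
      = (∑ q, (dv q:ℝ)*(uv q:ℝ)) - ∑ q, (dv q:ℝ)*(xv q:ℝ) := by
    rw [← Finset.sum_sub_distrib]
    exact Finset.sum_congr rfl fun q _ => by ring
  have hNL0 : 0 ≤ (N:ℝ)*L := by positivity
  constructor
  · -- part (I)
    have hcomb : 2*(∑ q, (dv q:ℝ)*(uv q:ℝ)) + (N:ℝ)^2 ≤ Gf N ℓ ε w dv := by
      have hεdu := mul_le_mul_of_nonneg_left hdu_min (le_of_lt hε0)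
      have h1εdu := mul_le_mul_of_nonneg_left hdu_D (by linarith : (0:ℝ) ≤ 1 - ε)
      have hεNL : ε*((N:ℝ)*L) ≤ (N:ℝ)*L := by nlinarith
      rw [hGf]
      nlinarith
    rw [hexp, hsplit]
    linarith
  · -- part (II)
    have hlow : (1-ε)*(∑ q, (dv q:ℝ) * D q) - ∑ q, (dv q:ℝ) * lam q ≤ L*N := by
      have heq : (1-ε)*(∑ q, (dv q:ℝ) * D q) - ∑ q, (dv q:ℝ) * lam q
          = ∑ q, (dv q:ℝ) * ((1-ε)*D q - lam q) := by
        rw [Finset.mul_sum, ← Finset.sum_sub_distrib]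
        exact Finset.sum_congr rfl fun q _ => by ring
      have hle2 : ∑ q, (dv q:ℝ) * ((1-ε)*D q - lam q) ≤ ∑ q, L * ((1-ε)*D q - lam q) := by
        refine Finset.sum_le_sum fun q _ => ?_
        have hrq : 0 ≤ (1-ε)*D q - lam q := by
          have := hdom q; rw [hDdef]; linarith
        exact mul_le_mul_of_nonneg_right (hdR q) hrq
      have heq2 : ∑ q, L * ((1-ε)*D q - lam q) = L * ((1-ε)*(N:ℝ) - ∑ q, lam q) := by
        rw [← Finset.mul_sum]
        congr 1
        rw [Finset.sum_sub_distrib, ← Finset.mul_sum, hsumD]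
      have hlamsum : 0 ≤ ∑ q, lam q := Finset.sum_nonneg fun q _ => hlam0 q
      have : L * ((1-ε)*(N:ℝ) - ∑ q, lam q) ≤ L*N := by nlinarith
      linarith
    have hmY : (N:ℝ)*m ≤ -Yv + 2*(N:ℝ)*L := by
      have hmL : m ≤ L := hq0 ▸ hdR q0
      have := min_bound hN dv m L hm_le hmL hL0 hdR
      rw [← hYdef] at this
      exact this
    have hscaled : 2*ε*m ≤ -(2*ε/N)*Yv + 4*ε*L := by
      have hN0 : (N:ℝ) ≠ 0 := ne_of_gt hNR
      have hpos : (0:ℝ) ≤ 2*ε/N := by positivity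
      have h := mul_le_mul_of_nonneg_left hmY hpos
      have hA : (2*ε/(N:ℝ))*((N:ℝ)*m) = 2*ε*m * ((N:ℝ)/(N:ℝ)) := by ring
      have hB : (2*ε/(N:ℝ))*(-Yv + 2*(N:ℝ)*L)
          = -(2*ε/(N:ℝ))*Yv + 4*ε*L*((N:ℝ)/(N:ℝ)) := by ring
      rw [hA, hB, div_self hN0, mul_one, mul_one] at h
      exact h
    have hεL : 4*ε*L ≤ 4*L := by
      have h := mul_le_mul_of_nonneg_right hε1 (le_of_lt hL0)
      linarith
    rw [hGf, hCC]
    linarith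

end MSL

namespace MSL

lemma exp_step_real (θ Y Y' V V' G Sx Nr : ℝ)
    (hY2 : Y^2 = V) (hY'2 : Y'^2 = V') (hYpos : 0 < Y)
    (hZabs : |Y' - Y| ≤ Nr)
    (hI : V' ≤ V + G - 2*Sx)
    (hθ0 : 0 < θ) (hθN : θ * Nr ≤ 1) :
    Real.exp (θ * Y')
      ≤ Real.exp (θ*Y) * (1 + θ^2*Nr^2 + θ/(2*Y)*G) - (θ/Y) * Real.exp (θ*Y) * Sx := by
  have hYne : Y ≠ 0 := ne_of_gt hYpos
  have hZ2 : 2*Y*(Y' - Y) ≤ V' - V := by nlinarith [sq_nonneg (Y' - Y)]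
  have hZG : 2*Y*(Y' - Y) ≤ G - 2*Sx := by linarith
  have habs : |θ*(Y'-Y)| ≤ 1 := by
    rw [abs_mul, abs_of_pos hθ0]
    calc θ*|Y'-Y| ≤ θ*Nr := mul_le_mul_of_nonneg_left hZabs (le_of_lt hθ0)
      _ ≤ 1 := by linarith [hθN]
  have hq := exp_quad habs
  have hsq : (θ*(Y'-Y))^2 ≤ θ^2*Nr^2 := by
    have h0 : (0:ℝ) ≤ |Y'-Y| := abs_nonneg _
    have h1 : (Y'-Y)^2 ≤ Nr^2 := by
      rw [← sq_abs]; nlinarith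
    rw [mul_pow]
    nlinarith [sq_nonneg θ]
  have hZle : θ*(Y'-Y) ≤ θ/(2*Y)*(G - 2*Sx) := by
    rw [div_mul_eq_mul_div, le_div_iff₀ (by linarith : (0:ℝ) < 2*Y)]
    calc θ*(Y'-Y)*(2*Y) = θ*(2*Y*(Y'-Y)) := by ring
      _ ≤ θ*(G-2*Sx) := mul_le_mul_of_nonneg_left hZG (le_of_lt hθ0)
  have hE : Real.exp (θ*(Y'-Y)) ≤ 1 + θ^2*Nr^2 + θ/(2*Y)*(G-2*Sx) := by linarith
  calc Real.exp (θ*Y') = Real.exp (θ*Y) * Real.exp (θ*(Y'-Y)) := by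
        rw [← Real.exp_add]; ring_nf
    _ ≤ Real.exp (θ*Y)*(1 + θ^2*Nr^2 + θ/(2*Y)*(G-2*Sx)) :=
        mul_le_mul_of_nonneg_left hE (le_of_lt (Real.exp_pos _))
    _ = Real.exp (θ*Y)*(1 + θ^2*Nr^2 + θ/(2*Y)*G) - (θ/Y)*Real.exp (θ*Y)*Sx := by
        field_simp
        ring

lemma contract_real (θ Y ε Nr CC G Sl E : ℝ)
    (hθ0 : 0 < θ) (hε0 : 0 < ε) (hY : 0 < Y) (hNr : 0 < Nr) (hE : E = Real.exp (θ*Y))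
    (hII : G - 2*Sl ≤ -(2*ε/Nr)*Y + CC)
    (hNCC : Nr*CC ≤ ε*Y)
    (hθsmall : θ^2*Nr^2 ≤ θ*ε/(4*Nr)) :
    E*(1 + θ^2*Nr^2 + θ/(2*Y)*G) - (θ/Y)*E*Sl ≤ (1 - θ*ε/(4*Nr))*E := by
  have hEpos : 0 < E := hE ▸ Real.exp_pos _
  have hYne : Y ≠ 0 := ne_of_gt hY
  have hNrne : Nr ≠ 0 := ne_of_gt hNr
  have hfac : 1 + θ^2*Nr^2 + θ/(2*Y)*G - (θ/Y)*Sl ≤ 1 - θ*ε/(4*Nr) := by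
    have h1 : θ/(2*Y)*G - (θ/Y)*Sl = θ/(2*Y)*(G - 2*Sl) := by field_simp
    have h2 : θ/(2*Y)*(G-2*Sl) ≤ θ/(2*Y)*(-(2*ε/Nr)*Y + CC) :=
      mul_le_mul_of_nonneg_left hII (by positivity)
    have h3 : θ/(2*Y)*(-(2*ε/Nr)*Y + CC) = -(θ*ε/Nr) + θ*CC/(2*Y) := by
      field_simp
    have h4 : θ*CC/(2*Y) ≤ θ*ε/(2*Nr) := by
      rw [div_le_div_iff₀ (by linarith) (by linarith)]
      nlinarith [mul_le_mul_of_nonneg_left hNCC (le_of_lt hθ0)]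
    have h5 : -(θ*ε/Nr) + θ*ε/(2*Nr) = -(θ*ε/(2*Nr)) := by field_simp; ring
    have h6 : θ*ε/(2*Nr) = 2*(θ*ε/(4*Nr)) := by
      field_simp; ring
    linarith
  calc E*(1 + θ^2*Nr^2 + θ/(2*Y)*G) - (θ/Y)*E*Sl
      = (1 + θ^2*Nr^2 + θ/(2*Y)*G - (θ/Y)*Sl)*E := by ring
    _ ≤ (1 - θ*ε/(4*Nr))*E := mul_le_mul_of_nonneg_right hfac (le_of_lt hEpos)

end MSL

namespace MSL

open Matrix in
lemma exists_dominating_aux {N : ℕ} :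
    ∀ k (M : Matrix (Fin N) (Fin N) ℝ),
    (∀ i j, 0 ≤ M i j) → (∀ i, ∑ j, M i j ≤ 1) → (∀ j, ∑ i, M i j ≤ 1) →
    ((Finset.univ.filter (fun i => ∑ j, M i j < 1)).card
      + (Finset.univ.filter (fun j => ∑ i, M i j < 1)).card = k) →
    ∃ D ∈ doublyStochastic ℝ (Fin N), ∀ i j, M i j ≤ D i j := by
  intro k
  induction k using Nat.strong_induction_on with
  | _ k ih =>
  intro M h0 hrow hcol hk
  by_cases hR : ∀ i, ∑ j, M i j = 1
  · -- all row sums are 1; then all column sums are 1 by counting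
    have htot : ∑ j, ∑ i, M i j = (N:ℝ) := by
      rw [Finset.sum_comm]
      simp [hR]
    have hcol1 : ∀ j, ∑ i, M i j = 1 := by
      by_contra hc
      push_neg at hc
      obtain ⟨j0, hj0⟩ := hc
      have hj0' : ∑ i, M i j0 < 1 := lt_of_le_of_ne (hcol j0) hj0
      have : ∑ j, ∑ i, M i j < ∑ _j : Fin N, (1:ℝ) := by
        refine Finset.sum_lt_sum (fun j _ => hcol j) ⟨j0, Finset.mem_univ j0, hj0'⟩
      simp [htot] at this
    refine ⟨M, ?_, fun i j => le_refl _⟩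
    rw [mem_doublyStochastic_iff_sum]
    exact ⟨h0, hR, hcol1⟩
  · push_neg at hR
    obtain ⟨i0, hi0⟩ := hR
    have hi0' : ∑ j, M i0 j < 1 := lt_of_le_of_ne (hrow i0) hi0
    -- there is a deficient column too
    have hcolex : ∃ j0, ∑ i, M i j0 < 1 := by
      by_contra hc
      push_neg at hc
      have hcol1 : ∀ j, ∑ i, M i j = 1 := fun j => le_antisymm (hcol j) (hc j)
      have h1 : ∑ i, ∑ j, M i j = (N:ℝ) := by
        rw [← Finset.sum_comm]
        simp [hcol1]
      have h2 : ∑ i, ∑ j, M i j < ∑ _i : Fin N, (1:ℝ) := by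
        refine Finset.sum_lt_sum (fun i _ => hrow i) ⟨i0, Finset.mem_univ i0, hi0'⟩
      simp [h1] at h2
    obtain ⟨j0, hj0⟩ := hcolex
    set δ : ℝ := min (1 - ∑ j, M i0 j) (1 - ∑ i, M i j0) with hδdef
    have hδ0 : 0 < δ := lt_min (by linarith) (by linarith)
    set M' : Matrix (Fin N) (Fin N) ℝ :=
      fun i j => M i j + (if i = i0 ∧ j = j0 then δ else 0) with hM'def
    have hM'ge : ∀ i j, M i j ≤ M' i j := by
      intro i j
      rw [hM'def]
      dsimp only
      split <;> [linarith; linarith]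
    have hrowM' : ∀ i, ∑ j, M' i j = (∑ j, M i j) + (if i = i0 then δ else 0) := by
      intro i
      rw [hM'def]
      dsimp only
      rw [Finset.sum_add_distrib]
      congr 1
      by_cases hi : i = i0
      · simp [hi, Finset.sum_ite_eq']
      · simp [hi]
    have hcolM' : ∀ j, ∑ i, M' i j = (∑ i, M i j) + (if j = j0 then δ else 0) := by
      intro j
      rw [hM'def]
      dsimp only
      rw [Finset.sum_add_distrib]
      congr 1
      by_cases hj : j = j0
      · simp [hj, Finset.sum_ite_eq']
      · simp [hj]
    have h0' : ∀ i j, 0 ≤ M' i j := by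
      intro i j
      rw [hM'def]; dsimp only
      split <;> [linarith [h0 i j]; linarith [h0 i j]]
    have hδrow : δ ≤ 1 - ∑ j, M i0 j := min_le_left _ _
    have hδcol : δ ≤ 1 - ∑ i, M i j0 := min_le_right _ _
    have hrow' : ∀ i, ∑ j, M' i j ≤ 1 := by
      intro i
      rw [hrowM' i]
      by_cases hi : i = i0
      · subst hi; rw [if_pos rfl]; linarith
      · rw [if_neg hi]; simpa using hrow i
    have hcol' : ∀ j, ∑ i, M' i j ≤ 1 := by
      intro j
      rw [hcolM' j]
      by_cases hj : j = j0
      · subst hj; rw [if_pos rfl]; linarith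
      · rw [if_neg hj]; simpa using hcol j
    -- the measure strictly decreases
    have hsubR : (Finset.univ.filter (fun i => ∑ j, M' i j < 1))
        ⊆ (Finset.univ.filter (fun i => ∑ j, M i j < 1)) := by
      intro i hi
      simp only [Finset.mem_filter, Finset.mem_univ, true_and] at hi ⊢
      rw [hrowM' i] at hi
      by_cases h : i = i0
      · subst h; rw [if_pos rfl] at hi; linarith
      · rw [if_neg h] at hi; linarith
    have hsubC : (Finset.univ.filter (fun j => ∑ i, M' i j < 1))
        ⊆ (Finset.univ.filter (fun j => ∑ i, M i j < 1)) := by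
      intro j hj
      simp only [Finset.mem_filter, Finset.mem_univ, true_and] at hj ⊢
      rw [hcolM' j] at hj
      by_cases h : j = j0
      · subst h; rw [if_pos rfl] at hj; linarith
      · rw [if_neg h] at hj; linarith
    have hlt : (Finset.univ.filter (fun i => ∑ j, M' i j < 1)).card
        + (Finset.univ.filter (fun j => ∑ i, M' i j < 1)).card < k := by
      rcases min_cases (1 - ∑ j, M i0 j) (1 - ∑ i, M i j0) with ⟨hmin, -⟩ | ⟨hmin, -⟩
      · -- row i0 gets saturated
        have hi0notin : i0 ∉ Finset.univ.filter (fun i => ∑ j, M' i j < 1) := by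
          simp only [Finset.mem_filter, Finset.mem_univ, true_and, not_lt]
          rw [hrowM' i0, if_pos rfl, hδdef, hmin]
          linarith
        have hi0in : i0 ∈ Finset.univ.filter (fun i => ∑ j, M i j < 1) := by
          simp only [Finset.mem_filter, Finset.mem_univ, true_and]
          exact hi0'
        have hcard1 : (Finset.univ.filter (fun i => ∑ j, M' i j < 1)).card
            < (Finset.univ.filter (fun i => ∑ j, M i j < 1)).card :=
          Finset.card_lt_card (Finset.ssubset_iff_of_subset hsubR |>.mpr
            ⟨i0, hi0in, hi0notin⟩)
        have hcard2 := Finset.card_le_card hsubC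
        omega
      · -- column j0 gets saturated
        have hj0notin : j0 ∉ Finset.univ.filter (fun j => ∑ i, M' i j < 1) := by
          simp only [Finset.mem_filter, Finset.mem_univ, true_and, not_lt]
          rw [hcolM' j0, if_pos rfl, hδdef, hmin]
          linarith
        have hj0in : j0 ∈ Finset.univ.filter (fun j => ∑ i, M i j < 1) := by
          simp only [Finset.mem_filter, Finset.mem_univ, true_and]
          exact hj0
        have hcard1 : (Finset.univ.filter (fun j => ∑ i, M' i j < 1)).card
            < (Finset.univ.filter (fun j => ∑ i, M i j < 1)).card :=
          Finset.card_lt_card (Finset.ssubset_iff_of_subset hsubC |>.mpr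
            ⟨j0, hj0in, hj0notin⟩)
        have hcard2 := Finset.card_le_card hsubR
        omega
    obtain ⟨D, hD, hDge⟩ := ih _ hlt M' h0' hrow' hcol' rfl
    exact ⟨D, hD, fun i j => le_trans (hM'ge i j) (hDge i j)⟩

end MSL

namespace MSL

lemma exists_decomposition {N : ℕ} (hN : 1 ≤ N) (lam : VOQ N → ℝ)
    (hlam : ∀ q, 0 < lam q ∧ lam q < 1)
    (hrow : ∀ i, ∑ j, lam (i,j) < 1) (hcol : ∀ j, ∑ i, lam (i,j) < 1) :
    ∃ ε : ℝ, 0 < ε ∧ ε ≤ 1 ∧ ∃ w : Equiv.Perm (Fin N) → ℝ,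
      (∀ σ, 0 ≤ w σ) ∧ (∑ σ, w σ = 1) ∧
      ∀ q, lam q ≤ (1-ε) * ∑ σ, w σ * ((confVec N σ q : ℤ):ℝ) := by
  haveI : Nonempty (Fin N) := ⟨⟨0, hN⟩⟩
  set s : ℝ := (Finset.univ.sup' Finset.univ_nonempty (fun i => ∑ j, lam (i,j)))
      ⊔ (Finset.univ.sup' Finset.univ_nonempty (fun j => ∑ i, lam (i,j))) with hsdef
  have hs1 : s < 1 := by
    rw [hsdef]
    refine max_lt ?_ ?_
    · exact (Finset.sup'_lt_iff _).mpr fun i _ => hrow i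
    · exact (Finset.sup'_lt_iff _).mpr fun j _ => hcol j
  have hrow_le : ∀ i, ∑ j, lam (i,j) ≤ s := fun i =>
    le_trans (Finset.le_sup' (f := fun i => ∑ j, lam (i,j)) (Finset.mem_univ i))
      (le_max_left _ _)
  have hcol_le : ∀ j, ∑ i, lam (i,j) ≤ s := fun j =>
    le_trans (Finset.le_sup' (f := fun j => ∑ i, lam (i,j)) (Finset.mem_univ j))
      (le_max_right _ _)
  have hs0 : 0 < s := by
    have i0 : Fin N := Classical.arbitrary _
    refine lt_of_lt_of_le ?_ (hrow_le i0)
    exact Finset.sum_pos (fun j _ => (hlam (i0,j)).1) ⟨Classical.arbitrary _, Finset.mem_univ _⟩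
  set ε : ℝ := (1 - s)/2 with hεdef
  have hε0 : 0 < ε := by rw [hεdef]; linarith
  have hε1 : ε ≤ 1 := by rw [hεdef]; linarith
  have hc : (0:ℝ) < 1 - ε := by rw [hεdef]; linarith
  have hsc : s ≤ 1 - ε := by rw [hεdef]; linarith
  set M : Matrix (Fin N) (Fin N) ℝ := fun i j => lam (i,j) / (1-ε) with hMdef
  have hM0 : ∀ i j, 0 ≤ M i j := fun i j => by
    rw [hMdef]; exact div_nonneg (le_of_lt (hlam (i,j)).1) (le_of_lt hc)
  have hMrow : ∀ i, ∑ j, M i j ≤ 1 := by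
    intro i
    rw [hMdef]
    dsimp only
    rw [← Finset.sum_div, div_le_one hc]
    exact le_trans (hrow_le i) hsc
  have hMcol : ∀ j, ∑ i, M i j ≤ 1 := by
    intro j
    rw [hMdef]
    dsimp only
    rw [← Finset.sum_div, div_le_one hc]
    exact le_trans (hcol_le j) hsc
  obtain ⟨D, hD, hDge⟩ := exists_dominating_aux _ M hM0 hMrow hMcol rfl
  obtain ⟨w, hw0, hw1, hw3⟩ := exists_eq_sum_perm_of_mem_doublyStochastic hD
  refine ⟨ε, hε0, hε1, w, hw0, hw1, ?_⟩
  intro q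
  have hentry : D q.1 q.2 = ∑ σ, w σ * ((confVec N σ q : ℤ):ℝ) := by
    rw [← hw3, Matrix.sum_apply]
    refine Finset.sum_congr rfl fun σ _ => ?_
    simp only [Matrix.smul_apply, smul_eq_mul]
    congr 1
    simp only [Equiv.Perm.permMatrix, PEquiv.toMatrix_apply, Equiv.toPEquiv_apply,
      Option.mem_def, Option.some.injEq, confVec]
    split <;> rename_i h
    · rw [if_pos (by exact h.symm ▸ rfl)]; norm_num
    · rw [if_neg (fun hh => h (by exact hh.symm ▸ rfl))]; norm_num
  have hq : lam q / (1-ε) ≤ D q.1 q.2 := by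
    have := hDge q.1 q.2
    rw [hMdef] at this
    simpa using this
  rw [← hentry]
  rw [div_le_iff₀ hc] at hq
  linarith

end MSL

namespace MSL

/-- Re-run of the deviation recursion as a function of the whole arrival table. -/
def Phi (N : ℕ) (u : (VOQ N → ℤ) → (VOQ N → ℤ) → (VOQ N → ℤ)) :
    ℕ → ((ℕ × VOQ N) → ℤ) → (VOQ N → ℤ)
  | 0, _ => 0
  | (t+1), y => Phi N u t y + u (Phi N u t y) (fun q => y (t, q)) - fun q => y (t, q)

lemma Phi_agree {N : ℕ} (u : (VOQ N → ℤ) → (VOQ N → ℤ) → (VOQ N → ℤ)) (t : ℕ)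
    (y y' : (ℕ × VOQ N) → ℤ) (h : ∀ p : ℕ × VOQ N, p.1 < t → y p = y' p) :
    Phi N u t y = Phi N u t y' := by
  induction t with
  | zero => rfl
  | succ t ih =>
    have ht : Phi N u t y = Phi N u t y' := ih (fun p hp => h p (Nat.lt_succ_of_lt hp))
    show Phi N u t y + u (Phi N u t y) (fun q => y (t, q)) - (fun q => y (t, q))
        = Phi N u t y' + u (Phi N u t y') (fun q => y' (t, q)) - fun q => y' (t, q)
    have hy : (fun q : VOQ N => y (t, q)) = fun q => y' (t, q) :=
      funext fun q => h (t, q) (Nat.lt_succ_self t)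
    rw [ht, hy]

end MSL
/-- **Theorem (100% admissibility of MSL(ℓ)).** For any admissible i.i.d. load `λ` on an
`N×N` switch (`N ≥ 1`) and any measurable MSL(ℓ) policy `u`, the deviation process `(d^t)`
generated from `d⁰ = 0` satisfies `liminf_{t→∞} E[d_q^t] > −∞` for every VOQ `q`. -/
theorem stmt8
    {Ω : Type*} [MeasurableSpace Ω] (μ : Measure Ω) [IsProbabilityMeasure μ]
    (N : ℕ) (hN : 1 ≤ N) (ℓ : ℕ)
    (lam : VOQ N → ℝ)
    (hlam : ∀ q, 0 < lam q ∧ lam q < 1)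
    (hadm_row : ∀ i : Fin N, ∑ j, lam (i, j) < 1)
    (hadm_col : ∀ j : Fin N, ∑ i, lam (i, j) < 1)
    (x : ℕ → VOQ N → Ω → ℤ)
    (hx01 : ∀ t q ω, x t q ω = 0 ∨ x t q ω = 1)
    (hxmeas : ∀ t q, Measurable (x t q))
    (hxindep : iIndepFun (fun p : ℕ × VOQ N => x p.1 p.2) μ)
    (hxlaw : ∀ t q, μ {ω | x t q ω = 1} = ENNReal.ofReal (lam q))
    (u : (VOQ N → ℤ) → (VOQ N → ℤ) → (VOQ N → ℤ))
    (humeas : Measurable (Function.uncurry u))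
    (hMSL : ∀ dv xv : VOQ N → ℤ, ∃ π : Equiv.Perm (Fin N),
      (∀ π' : Equiv.Perm (Fin N),
        ipZ N (dv - xv) (confVec N π) ≤ ipZ N (dv - xv) (confVec N π')) ∧
      u dv xv = fun q => if (ℓ : ℤ) ≤ dv q - xv q then 0 else confVec N π q)
    (d : ℕ → Ω → VOQ N → ℤ)
    (hd0 : ∀ ω, d 0 ω = 0)
    (hdrec : ∀ t ω, d (t + 1) ω =
      d t ω + u (d t ω) (fun q => x t q ω) - fun q => x t q ω) :
    ∀ q : VOQ N,
      ⊥ < Filter.liminf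
        (fun t : ℕ => ((∫ ω, ((d t ω q : ℝ)) ∂μ : ℝ) : EReal)) Filter.atTop := by
  classical
  obtain ⟨ε, hε0, hε1, w, hw0, hw1, hdom⟩ :=
    MSL.exists_decomposition hN lam hlam hadm_row hadm_col
  have hNR : (0:ℝ) < N := by exact_mod_cast lt_of_lt_of_le zero_lt_one hN
  have hN1 : (1:ℝ) ≤ N := by exact_mod_cast hN
  have hlam0 : ∀ q, 0 ≤ lam q := fun q => le_of_lt (hlam q).1
  have hCC0 : 0 < MSL.CCf N ℓ := MSL.CCf_pos N ℓ hN
  set CC : ℝ := MSL.CCf N ℓ with hCCdef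
  set K : ℝ := (N:ℝ) * CC / ε with hKdef
  have hK0 : 0 < K := div_pos (mul_pos hNR hCC0) hε0
  set θ : ℝ := min (1/(N:ℝ)) (ε/(4*(N:ℝ)^3)) with hθdef
  have hθ0 : 0 < θ := lt_min (by positivity) (by positivity)
  have hθinvN : θ ≤ 1/(N:ℝ) := min_le_left _ _
  have hθN : θ * (N:ℝ) ≤ 1 := by
    calc θ * (N:ℝ) ≤ (1/(N:ℝ)) * (N:ℝ) := mul_le_mul_of_nonneg_right hθinvN (le_of_lt hNR)
      _ = 1 := by field_simp
  have hθ1 : θ ≤ 1 := by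
    refine le_trans hθinvN ?_
    rw [div_le_one hNR]; exact hN1
  have hθsmall : θ^2*(N:ℝ)^2 ≤ θ*ε/(4*(N:ℝ)) := by
    have h2 : θ ≤ ε/(4*(N:ℝ)^3) := min_le_right _ _
    have h3 := mul_le_mul_of_nonneg_left h2 (le_of_lt hθ0)
    have h4 := mul_le_mul_of_nonneg_right h3 (by positivity : (0:ℝ) ≤ (N:ℝ)^2)
    have h5 : θ * (ε/(4*(N:ℝ)^3)) * (N:ℝ)^2 = θ*ε/(4*(N:ℝ)) := by
      field_simp
    calc θ^2*(N:ℝ)^2 = θ*θ*(N:ℝ)^2 := by ring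
      _ ≤ θ * (ε/(4*(N:ℝ)^3)) * (N:ℝ)^2 := h4
      _ = θ*ε/(4*(N:ℝ)) := h5
  set ρ : ℝ := 1 - θ*ε/(4*(N:ℝ)) with hρdef
  have hρ1 : ρ < 1 := by
    rw [hρdef]
    have : 0 < θ*ε/(4*(N:ℝ)) := by positivity
    linarith
  have hρ0 : 0 ≤ ρ := by
    rw [hρdef]
    have h14 : θ*ε/(4*(N:ℝ)) ≤ 1/4 := by
      rw [div_le_iff₀ (by positivity : (0:ℝ) < 4*(N:ℝ))]
      nlinarith
    linarith
  set CK : ℝ := Real.exp (θ*(K+(N:ℝ))) with hCKdef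
  have hCK0 : 0 < CK := Real.exp_pos _
  set Mb : ℝ := max 1 (CK/(1-ρ)) with hMbdef
  -- pointwise facts
  have hd_le : ∀ (t:ℕ) ω q', d t ω q' ≤ (ℓ:ℤ)+1 := by
    intro t
    induction t with
    | zero => intro ω q'; rw [hd0]; simp; positivity
    | succ t ih =>
      intro ω q'
      rw [hdrec t ω]
      exact MSL.d_invariant hMSL _ _ (fun q'' => hx01 t q'' ω) (fun q'' => ih ω q'') q'
  have hd_abs : ∀ (t:ℕ) ω q', |d t ω q'| ≤ (t:ℤ) := by
    intro t
    induction t with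
    | zero => intro ω q'; rw [hd0]; simp
    | succ t ih =>
      intro ω q'
      rw [hdrec t ω]
      have h1 := ih ω q'
      have h2 := MSL.u_cases hMSL (d t ω) (fun q'' => x t q'' ω) q'
      have h3 := hx01 t q' ω
      simp only [Pi.add_apply, Pi.sub_apply]
      rw [abs_le] at h1 ⊢
      rcases h2 with h2 | h2 <;> rcases h3 with h3 | h3 <;>
        rw [h2, h3] <;> push_cast <;> push_cast at h1 <;> omega
  have hdmeas : ∀ t, Measurable (fun ω => d t ω) := by
    intro t
    induction t with
    | zero =>
      have : (fun ω => d 0 ω) = fun _ => (0 : VOQ N → ℤ) := funext hd0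
      rw [this]; exact measurable_const
    | succ t ih =>
      have hxv : Measurable (fun ω (q' : VOQ N) => x t q' ω) :=
        measurable_pi_lambda _ (fun q' => hxmeas t q')
      have hpair : Measurable (fun ω => (d t ω, fun q' : VOQ N => x t q' ω)) :=
        ih.prodMk hxv
      have hF : Measurable (fun p : (VOQ N → ℤ) × (VOQ N → ℤ) => p.1 + u p.1 p.2 - p.2) :=
        measurable_of_countable _
      have : (fun ω => d (t+1) ω)
          = (fun p : (VOQ N → ℤ) × (VOQ N → ℤ) => p.1 + u p.1 p.2 - p.2)
            ∘ (fun ω => (d t ω, fun q' : VOQ N => x t q' ω)) := by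
        funext ω; exact hdrec t ω
      rw [this]
      exact hF.comp hpair
  have hcomp_meas : ∀ (t:ℕ) (g : (VOQ N → ℤ) → ℝ), Measurable (fun ω => g (d t ω)) :=
    fun t g => (measurable_of_countable g).comp (hdmeas t)
  have hcomp_bdd : ∀ (t:ℕ) (g : (VOQ N → ℤ) → ℝ), ∃ C, ∀ ω, |g (d t ω)| ≤ C := by
    intro t g
    set Kt : Finset (VOQ N → ℤ) := Fintype.piFinset (fun _ => Finset.Icc (-(t:ℤ)) t) with hKt
    have hmem : ∀ ω, d t ω ∈ Kt := by
      intro ω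
      rw [hKt, Fintype.mem_piFinset]
      intro q'
      rw [Finset.mem_Icc]
      exact abs_le.mp (hd_abs t ω q')
    have h0mem : (0 : VOQ N → ℤ) ∈ Kt := by
      rw [hKt, Fintype.mem_piFinset]
      intro q'
      rw [Finset.mem_Icc]
      simp
    have hne : (Kt.image (fun dv => |g dv|)).Nonempty :=
      Finset.Nonempty.image ⟨0, h0mem⟩ _
    refine ⟨(Kt.image (fun dv => |g dv|)).max' hne, fun ω => ?_⟩
    exact Finset.le_max' _ _ (Finset.mem_image_of_mem (fun dv => |g dv|) (hmem ω))
  have hbint : ∀ (f : Ω → ℝ) (C : ℝ), Measurable f → (∀ ω, |f ω| ≤ C) → Integrable f μ := by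
    intro f C hf hb
    exact (integrable_const C).mono' hf.aestronglyMeasurable
      (ae_of_all μ (by simpa [Real.norm_eq_abs] using hb))
  have hcomp_int : ∀ (t:ℕ) (g : (VOQ N → ℤ) → ℝ), Integrable (fun ω => g (d t ω)) μ := by
    intro t g
    obtain ⟨C, hC⟩ := hcomp_bdd t g
    exact hbint _ C (hcomp_meas t g) hC
  have hxr_abs : ∀ (t:ℕ) (q' : VOQ N) ω, |((x t q' ω : ℤ):ℝ)| ≤ 1 := by
    intro t q' ω
    rcases hx01 t q' ω with h | h <;> rw [h] <;> norm_num
  have hxr_meas : ∀ (t:ℕ) (q' : VOQ N), Measurable (fun ω => ((x t q' ω : ℤ):ℝ)) :=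
    fun t q' => (measurable_of_countable _).comp (hxmeas t q')
  have hcomp_int_mul : ∀ (t:ℕ) (q' : VOQ N) (g : (VOQ N → ℤ) → ℝ),
      Integrable (fun ω => g (d t ω) * ((x t q' ω : ℤ):ℝ)) μ := by
    intro t q' g
    obtain ⟨C, hC⟩ := hcomp_bdd t g
    refine hbint _ C ((hcomp_meas t g).mul (hxr_meas t q')) (fun ω => ?_)
    rw [abs_mul]
    calc |g (d t ω)| * |((x t q' ω : ℤ):ℝ)| ≤ |g (d t ω)| * 1 :=
          mul_le_mul_of_nonneg_left (hxr_abs t q' ω) (abs_nonneg _)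
      _ = |g (d t ω)| := mul_one _
      _ ≤ C := hC ω
  -- expectation of arrivals
  have hEx : ∀ (t:ℕ) (q' : VOQ N), ∫ ω, ((x t q' ω : ℤ):ℝ) ∂μ = lam q' := by
    intro t q'
    have hset : MeasurableSet {ω | x t q' ω = 1} := by
      have heq : {ω | x t q' ω = 1} = (x t q') ⁻¹' {1} := rfl
      rw [heq]
      exact hxmeas t q' (measurableSet_singleton 1)
    have hfun : (fun ω => ((x t q' ω : ℤ):ℝ))
        = Set.indicator {ω | x t q' ω = 1} (fun _ => (1:ℝ)) := by
      funext ω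
      rcases hx01 t q' ω with h | h
      · rw [Set.indicator_of_notMem (by simp [Set.mem_setOf_eq, h]), h]
        norm_num
      · rw [Set.indicator_of_mem (by exact h), h]
        norm_num
    rw [hfun, MeasureTheory.integral_indicator_const _ hset, measureReal_def, hxlaw t q',
      ENNReal.toReal_ofReal (hlam0 q')]
    simp
  -- representation of the state as a function of past arrivals
  have hPhi : ∀ (t:ℕ) ω, d t ω = MSL.Phi N u t (fun p => x p.1 p.2 ω) := by
    intro t
    induction t with
    | zero => intro ω; rw [hd0]; rfl
    | succ t ih =>
      intro ω
      rw [hdrec t ω, ih ω]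
      rfl
  -- independence/product rule
  have hindep : ∀ (t:ℕ) (q' : VOQ N) (g : (VOQ N → ℤ) → ℝ),
      ∫ ω, g (d t ω) * ((x t q' ω : ℤ):ℝ) ∂μ = (∫ ω, g (d t ω) ∂μ) * lam q' := by
    intro t q' g
    set S : Finset (ℕ × VOQ N) := Finset.range t ×ˢ Finset.univ with hSdef
    set T : Finset (ℕ × VOQ N) := {(t, q')} with hTdef
    have hdisj : Disjoint S T := by
      rw [hTdef, Finset.disjoint_singleton_right, hSdef, Finset.mem_product]
      simp
    have hbase := hxindep.indepFun_finset S T hdisj (fun p => hxmeas p.1 p.2)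
    have hTmem : ((t, q') : ℕ × VOQ N) ∈ T := by rw [hTdef]; exact Finset.mem_singleton_self _
    set F : (↥S → ℤ) → ℝ :=
      fun z => g (MSL.Phi N u t (fun p => if h : p ∈ S then z ⟨p, h⟩ else 0)) with hFdef
    set G : (↥T → ℤ) → ℝ := fun z => ((z ⟨(t,q'), hTmem⟩ : ℤ) : ℝ) with hGdef
    have hFmeas : Measurable F := measurable_of_countable _
    have hGmeas : Measurable G := measurable_of_countable _
    have hcomp := hbase.comp hFmeas hGmeas
    have heq1 : (F ∘ fun a (i : ↥S) => x i.1.1 i.1.2 a) = fun ω => g (d t ω) := by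
      funext ω
      show g (MSL.Phi N u t
        (fun p => if h : p ∈ S then x p.1 p.2 ω else 0)) = g (d t ω)
      congr 1
      rw [hPhi t ω]
      apply MSL.Phi_agree
      intro p hp
      have hpS : p ∈ S := by
        rw [hSdef, Finset.mem_product]
        exact ⟨Finset.mem_range.mpr hp, Finset.mem_univ _⟩
      rw [dif_pos hpS]
    have heq2 : (G ∘ fun a (i : ↥T) => x i.1.1 i.1.2 a)
        = fun ω => ((x t q' ω : ℤ):ℝ) := rfl
    rw [heq1, heq2] at hcomp
    have hxint : Integrable (fun ω => ((x t q' ω : ℤ):ℝ)) μ :=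
      hbint _ 1 (hxr_meas t q') (hxr_abs t q')
    have hmul := hcomp.integral_mul_eq_mul_integral (hcomp_int t g).aestronglyMeasurable hxint.aestronglyMeasurable
    calc ∫ ω, g (d t ω) * ((x t q' ω : ℤ):ℝ) ∂μ
        = ∫ ω, ((fun ω => g (d t ω)) * fun ω => ((x t q' ω : ℤ):ℝ)) ω ∂μ := rfl
      _ = (∫ ω, g (d t ω) ∂μ) * ∫ ω, ((x t q' ω : ℤ):ℝ) ∂μ := hmul
      _ = (∫ ω, g (d t ω) ∂μ) * lam q' := by rw [hEx t q']
  -- the exponential Lyapunov recursion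
  set Ef : ℕ → ℝ := fun t => ∫ ω, Real.exp (θ * MSL.rY (d t ω)) ∂μ with hEfdef
  have hEf0 : Ef 0 = 1 := by
    rw [hEfdef]
    have : ∀ ω, Real.exp (θ * MSL.rY (d 0 ω)) = 1 := by
      intro ω
      rw [hd0]
      have : MSL.rY (0 : VOQ N → ℤ) = 0 := by
        unfold MSL.rY MSL.rV
        simp
      rw [this, mul_zero, Real.exp_zero]
    simp only [this, integral_const, measure_univ, probReal_univ, ENNReal.toReal_one, smul_eq_mul, mul_one]
  have hEfrec : ∀ t, Ef (t+1) ≤ ρ * Ef t + CK := by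
    intro t
    have hstep : ∀ ω, |MSL.rY (d (t+1) ω) - MSL.rY (d t ω)| ≤ (N:ℝ) := by
      intro ω
      apply MSL.rY_diff_abs
      intro q''
      rw [hdrec t ω]
      have h2 := MSL.u_cases hMSL (d t ω) (fun q'' => x t q'' ω) q''
      have h3 := hx01 t q'' ω
      simp only [Pi.add_apply, Pi.sub_apply]
      rw [abs_le]
      rcases h2 with h2 | h2 <;> rcases h3 with h3 | h3 <;> rw [h2, h3] <;> omega
    set gA : (VOQ N → ℤ) → ℝ := fun dv =>
      if K ≤ MSL.rY dv then
        Real.exp (θ*MSL.rY dv)*(1 + θ^2*(N:ℝ)^2 + θ/(2*MSL.rY dv)*MSL.Gf N ℓ ε w dv)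
      else 0 with hgAdef
    set gB : VOQ N → (VOQ N → ℤ) → ℝ := fun q'' dv =>
      if K ≤ MSL.rY dv then (θ/MSL.rY dv)*Real.exp (θ*MSL.rY dv)*((dv q'' : ℤ):ℝ)
      else 0 with hgBdef
    set gC : (VOQ N → ℤ) → ℝ := fun dv => if K ≤ MSL.rY dv then 0 else CK with hgCdef
    have hdk : ∀ ω,
        MSL.rV (d t ω + u (d t ω) (fun q'' => x t q'' ω) - (fun q'' => x t q'' ω))
          ≤ MSL.rV (d t ω) + MSL.Gf N ℓ ε w (d t ω)
            - 2 * ∑ q'', ((d t ω q'' : ℤ):ℝ) * ((x t q'' ω : ℤ):ℝ)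
        ∧ MSL.Gf N ℓ ε w (d t ω) - 2 * ∑ q'', ((d t ω q'' : ℤ):ℝ) * lam q''
          ≤ -(2*ε/(N:ℝ)) * MSL.rY (d t ω) + MSL.CCf N ℓ := fun ω =>
      MSL.drift_key ℓ hN ε hε0 hε1 lam hlam0 w hw0 hw1 hdom
        (d t ω) (fun q'' => x t q'' ω) (u (d t ω) (fun q'' => x t q'' ω))
        (fun q'' => hd_le t ω q'') (fun q'' => hx01 t q'' ω)
        (MSL.u_cases hMSL _ _) (MSL.policy_ip_bound hMSL _ _ (fun q'' => hx01 t q'' ω))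
    have hpt1 : ∀ ω, Real.exp (θ * MSL.rY (d (t+1) ω))
        ≤ gA (d t ω) - (∑ q'', gB q'' (d t ω) * ((x t q'' ω : ℤ):ℝ)) + gC (d t ω) := by
      intro ω
      by_cases hK : K ≤ MSL.rY (d t ω)
      · have hYpos : 0 < MSL.rY (d t ω) := lt_of_lt_of_le hK0 hK
        have hI := (hdk ω).1
        rw [← hdrec t ω] at hI
        have hes := MSL.exp_step_real θ (MSL.rY (d t ω)) (MSL.rY (d (t+1) ω))
          (MSL.rV (d t ω)) (MSL.rV (d (t+1) ω)) (MSL.Gf N ℓ ε w (d t ω))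
          (∑ q'', ((d t ω q'' : ℤ):ℝ) * ((x t q'' ω : ℤ):ℝ)) (N:ℝ)
          (MSL.rY_sq _) (MSL.rY_sq _) hYpos (hstep ω) hI hθ0 hθN
        have hsumB : ∑ q'', gB q'' (d t ω) * ((x t q'' ω : ℤ):ℝ)
            = (θ/MSL.rY (d t ω))*Real.exp (θ*MSL.rY (d t ω))
              * ∑ q'', ((d t ω q'' : ℤ):ℝ)*((x t q'' ω : ℤ):ℝ) := by
          rw [Finset.mul_sum]
          refine Finset.sum_congr rfl fun q'' _ => ?_
          rw [hgBdef]
          dsimp only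
          rw [if_pos hK]
          ring
        have hA : gA (d t ω) = Real.exp (θ*MSL.rY (d t ω))
            *(1 + θ^2*(N:ℝ)^2 + θ/(2*MSL.rY (d t ω))*MSL.Gf N ℓ ε w (d t ω)) := by
          rw [hgAdef]; dsimp only; rw [if_pos hK]
        have hC : gC (d t ω) = 0 := by
          rw [hgCdef]; dsimp only; rw [if_pos hK]
        rw [hsumB, hA, hC]
        linarith
      · have hY1 : MSL.rY (d (t+1) ω) ≤ MSL.rY (d t ω) + N := by
          have h := abs_le.mp (hstep ω)
          linarith [h.2]
        have hYK : MSL.rY (d t ω) < K := not_le.mp hK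
        have hle : Real.exp (θ * MSL.rY (d (t+1) ω)) ≤ CK := by
          rw [hCKdef]
          apply Real.exp_le_exp.mpr
          have : MSL.rY (d (t+1) ω) ≤ K + N := by linarith
          exact mul_le_mul_of_nonneg_left this hθ0.le
        have hA : gA (d t ω) = 0 := by rw [hgAdef]; dsimp only; rw [if_neg hK]
        have hC : gC (d t ω) = CK := by rw [hgCdef]; dsimp only; rw [if_neg hK]
        have hsumB : ∑ q'', gB q'' (d t ω) * ((x t q'' ω : ℤ):ℝ) = 0 := by
          refine Finset.sum_eq_zero fun q'' _ => ?_
          rw [hgBdef]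
          dsimp only
          rw [if_neg hK, zero_mul]
        rw [hsumB, hA, hC]
        linarith
    have hpt2 : ∀ ω, gA (d t ω) - (∑ q'', gB q'' (d t ω) * lam q'')
        ≤ ρ * Real.exp (θ * MSL.rY (d t ω)) := by
      intro ω
      by_cases hK : K ≤ MSL.rY (d t ω)
      · have hYpos : 0 < MSL.rY (d t ω) := lt_of_lt_of_le hK0 hK
        have hII := (hdk ω).2
        have hNCC : (N:ℝ)*CC ≤ ε * MSL.rY (d t ω) := by
          have h1 : ε*K = (N:ℝ)*CC := by
            rw [hKdef]; field_simp
          have h2 : ε*K ≤ ε*MSL.rY (d t ω) := mul_le_mul_of_nonneg_left hK hε0.le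
          linarith
        have hcr := MSL.contract_real θ (MSL.rY (d t ω)) ε (N:ℝ) CC
          (MSL.Gf N ℓ ε w (d t ω)) (∑ q'', ((d t ω q'' : ℤ):ℝ) * lam q'')
          (Real.exp (θ*MSL.rY (d t ω))) hθ0 hε0 hYpos hNR rfl
          (by rw [hCCdef]; exact hII) hNCC hθsmall
        have hsumB : ∑ q'', gB q'' (d t ω) * lam q''
            = (θ/MSL.rY (d t ω))*Real.exp (θ*MSL.rY (d t ω))
              * ∑ q'', ((d t ω q'' : ℤ):ℝ)*lam q'' := by
          rw [Finset.mul_sum]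
          refine Finset.sum_congr rfl fun q'' _ => ?_
          rw [hgBdef]
          dsimp only
          rw [if_pos hK]
          ring
        have hA : gA (d t ω) = Real.exp (θ*MSL.rY (d t ω))
            *(1 + θ^2*(N:ℝ)^2 + θ/(2*MSL.rY (d t ω))*MSL.Gf N ℓ ε w (d t ω)) := by
          rw [hgAdef]; dsimp only; rw [if_pos hK]
        rw [hsumB, hA, hρdef]
        linarith
      · have hA : gA (d t ω) = 0 := by rw [hgAdef]; dsimp only; rw [if_neg hK]
        have hsumB : ∑ q'', gB q'' (d t ω) * lam q'' = 0 := by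
          refine Finset.sum_eq_zero fun q'' _ => ?_
          rw [hgBdef]
          dsimp only
          rw [if_neg hK, zero_mul]
        rw [hsumB, hA]
        have := mul_nonneg hρ0 (Real.exp_pos (θ * MSL.rY (d t ω))).le
        linarith
    -- integrate the pointwise bounds
    have hint_gA : Integrable (fun ω => gA (d t ω)) μ := hcomp_int t gA
    have hint_gC : Integrable (fun ω => gC (d t ω)) μ := hcomp_int t gC
    have hint_gBx : ∀ q'' : VOQ N,
        Integrable (fun ω => gB q'' (d t ω) * ((x t q'' ω : ℤ):ℝ)) μ :=
      fun q'' => hcomp_int_mul t q'' (gB q'')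
    have hint_sum : Integrable (fun ω => ∑ q'', gB q'' (d t ω) * ((x t q'' ω : ℤ):ℝ)) μ :=
      integrable_finset_sum _ (fun q'' _ => hint_gBx q'')
    have hint_exp1 : Integrable (fun ω => Real.exp (θ*MSL.rY (d (t+1) ω))) μ :=
      hcomp_int (t+1) (fun dv => Real.exp (θ*MSL.rY dv))
    have hint_sub : Integrable
        (fun ω => gA (d t ω) - ∑ q'', gB q'' (d t ω) * ((x t q'' ω : ℤ):ℝ)) μ :=
      hint_gA.sub hint_sum
    have hint_rhs : Integrable
        (fun ω => gA (d t ω) - (∑ q'', gB q'' (d t ω) * ((x t q'' ω : ℤ):ℝ))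
          + gC (d t ω)) μ := hint_sub.add hint_gC
    have hmono := integral_mono hint_exp1 hint_rhs hpt1
    have hsplit : ∫ ω, (gA (d t ω) - (∑ q'', gB q'' (d t ω) * ((x t q'' ω : ℤ):ℝ))
          + gC (d t ω)) ∂μ
        = ∫ ω, gA (d t ω) ∂μ - (∑ q'', (∫ ω, gB q'' (d t ω) ∂μ) * lam q'')
          + ∫ ω, gC (d t ω) ∂μ := by
      rw [integral_add hint_sub hint_gC,
        integral_sub hint_gA hint_sum,
        integral_finset_sum _ (fun q'' _ => hint_gBx q'')]
      congr 2
      exact Finset.sum_congr rfl fun q'' _ => hindep t q'' (gB q'')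
    have hint_gBlam : ∀ q'' : VOQ N, Integrable (fun ω => gB q'' (d t ω) * lam q'') μ :=
      fun q'' => hcomp_int t (fun dv => gB q'' dv * lam q'')
    have hrec2 : ∫ ω, gA (d t ω) ∂μ - (∑ q'', (∫ ω, gB q'' (d t ω) ∂μ) * lam q'')
        = ∫ ω, (gA (d t ω) - ∑ q'', gB q'' (d t ω) * lam q'') ∂μ := by
      rw [integral_sub hint_gA (integrable_finset_sum _ (fun q'' _ => hint_gBlam q'')),
        integral_finset_sum _ (fun q'' _ => hint_gBlam q'')]
      congr 1
      exact Finset.sum_congr rfl fun q'' _ => (integral_mul_const (lam q'') _).symm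
    have hmid : ∫ ω, (gA (d t ω) - ∑ q'', gB q'' (d t ω) * lam q'') ∂μ ≤ ρ * Ef t := by
      have hint_sub2 : Integrable
          (fun ω => gA (d t ω) - ∑ q'', gB q'' (d t ω) * lam q'') μ :=
        hint_gA.sub (integrable_finset_sum _ (fun q'' _ => hint_gBlam q''))
      have h1 := integral_mono hint_sub2
        (hcomp_int t (fun dv => ρ * Real.exp (θ*MSL.rY dv))) hpt2
      calc ∫ ω, (gA (d t ω) - ∑ q'', gB q'' (d t ω) * lam q'') ∂μ
          ≤ ∫ ω, ρ * Real.exp (θ*MSL.rY (d t ω)) ∂μ := h1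
        _ = ρ * Ef t := by rw [integral_const_mul]
    have hgCb : ∫ ω, gC (d t ω) ∂μ ≤ CK := by
      have hle : ∀ ω, gC (d t ω) ≤ CK := by
        intro ω
        rw [hgCdef]
        dsimp only
        split
        · exact hCK0.le
        · exact le_refl _
      calc ∫ ω, gC (d t ω) ∂μ ≤ ∫ _ω, CK ∂μ := integral_mono hint_gC (integrable_const _) hle
        _ = CK := by simp
    calc Ef (t+1) = ∫ ω, Real.exp (θ*MSL.rY (d (t+1) ω)) ∂μ := rfl
      _ ≤ ∫ ω, (gA (d t ω) - (∑ q'', gB q'' (d t ω) * ((x t q'' ω : ℤ):ℝ))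
            + gC (d t ω)) ∂μ := hmono
      _ = ∫ ω, gA (d t ω) ∂μ - (∑ q'', (∫ ω, gB q'' (d t ω) ∂μ) * lam q'')
            + ∫ ω, gC (d t ω) ∂μ := hsplit
      _ ≤ ρ * Ef t + CK := by
          rw [hrec2]
          linarith [hmid, hgCb]
  have hEfb : ∀ t, Ef t ≤ Mb := by
    intro t
    induction t with
    | zero => rw [hEf0, hMbdef]; exact le_max_left _ _
    | succ t ih =>
      have h1 : CK/(1-ρ) ≤ Mb := by rw [hMbdef]; exact le_max_right _ _
      have h2 : CK ≤ Mb * (1-ρ) := by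
        rw [div_le_iff₀ (by linarith : (0:ℝ) < 1-ρ)] at h1
        linarith
      calc Ef (t+1) ≤ ρ * Ef t + CK := hEfrec t
        _ ≤ ρ * Mb + CK := by
            have := mul_le_mul_of_nonneg_left ih hρ0
            linarith
        _ ≤ Mb := by nlinarith
  -- conclusion
  intro q
  have hEfpos : ∀ t, 0 ≤ Ef t := by
    intro t
    rw [hEfdef]
    exact integral_nonneg (fun ω => le_of_lt (Real.exp_pos _))
  have hlb : ∀ t, -(Mb/θ) ≤ ∫ ω, ((d t ω q : ℤ):ℝ) ∂μ := by
    intro t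
    have hpt : ∀ ω, -(Real.exp (θ * MSL.rY (d t ω))/θ) ≤ ((d t ω q : ℤ):ℝ) := by
      intro ω
      have h1 : |((d t ω q : ℤ):ℝ)| ≤ MSL.rY (d t ω) := MSL.abs_le_rY (d t ω) q
      have h2 : θ * MSL.rY (d t ω) ≤ Real.exp (θ * MSL.rY (d t ω)) := by
        have := Real.add_one_le_exp (θ * MSL.rY (d t ω))
        linarith
      have h3 : MSL.rY (d t ω) ≤ Real.exp (θ * MSL.rY (d t ω))/θ := by
        rw [le_div_iff₀ hθ0]
        linarith [h2]
      have h4 := abs_le.mp h1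
      linarith [h3, h4.1]
    have hint1 : Integrable (fun ω => ((d t ω q : ℤ):ℝ)) μ :=
      hcomp_int t (fun dv => ((dv q : ℤ):ℝ))
    have hint2 : Integrable (fun ω => -(Real.exp (θ * MSL.rY (d t ω))/θ)) μ := by
      have := hcomp_int t (fun dv => -(Real.exp (θ * MSL.rY dv)/θ))
      exact this
    have := integral_mono hint2 hint1 hpt
    have heq : ∫ ω, -(Real.exp (θ * MSL.rY (d t ω))/θ) ∂μ = -(Ef t/θ) := by
      rw [integral_neg]
      congr 1
      rw [integral_div]
    rw [heq] at this
    have h5 : Ef t / θ ≤ Mb / θ :=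
      div_le_div_of_nonneg_right (hEfb t) hθ0.le
    linarith
  have hc : ∀ t : ℕ, ((-(Mb/θ) : ℝ) : EReal) ≤ ((∫ ω, ((d t ω q : ℤ):ℝ) ∂μ : ℝ) : EReal) := by
    intro t
    exact_mod_cast EReal.coe_le_coe_iff.mpr (hlb t)
  calc (⊥ : EReal) < ((-(Mb/θ) : ℝ) : EReal) := EReal.bot_lt_coe _
    _ = Filter.liminf (fun _ : ℕ => ((-(Mb/θ) : ℝ) : EReal)) Filter.atTop :=
        (Filter.liminf_const _).symm
    _ ≤ Filter.liminf (fun t : ℕ => ((∫ ω, ((d t ω q : ℤ):ℝ) ∂μ : ℝ) : EReal)) Filter.atTop :=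
        Filter.liminf_le_liminf (Filter.Eventually.of_forall hc)
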